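/- arXiv:math/0504066 — 3 statements merged into one kernel-verified Lean document; each statement's English description precedes it below -/
import Mathlib

section
/- For n ≥ 3, 0 ≤ δ < 1/(n-2), and γ = (1 + (2-n)δ)/(1+δ), the function G(x) = |x|^γ on ℝⁿ \ {0} satisfies: the symmetric matrix D²G + δ(ΔG)I has one eigenvalue equal to 0 and the remaining n-1 eigenvalues all equal to γ(2-γ)|x|^{γ-2} > 0; in particular det(D²G + δ(ΔG)I) = 0 and D²G + δ(ΔG)I is positive semidefinite. -/
open Real
open scoped Matrix

noncomputable def Jmap (n : ℕ) :
    EuclideanSpace ℝ (Fin n) →L[ℝ] EuclideanSpace ℝ (Fin n) →L[ℝ] ℝ := innerSL ℝ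

@[simp] lemma Jmap_apply {n : ℕ} (z w : EuclideanSpace ℝ (Fin n)) :
    Jmap n z w = (inner ℝ z w : ℝ) := rfl

lemma hasFDerivAt_q {n : ℕ} (y : EuclideanSpace ℝ (Fin n)) :
    HasFDerivAt (fun z : EuclideanSpace ℝ (Fin n) => (inner ℝ z z : ℝ))
      ((2 : ℝ) • innerSL ℝ y) y := by
  have h := (hasFDerivAt_id y).inner ℝ (hasFDerivAt_id y)
  refine HasFDerivAt.congr_fderiv h (Eq.symm ?_)
  ext u
  simp [fderivInnerCLM_apply, two_mul, real_inner_comm]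

lemma hess {n : ℕ} (γ : ℝ) {x : EuclideanSpace ℝ (Fin n)} (hx : x ≠ 0)
    (u v : EuclideanSpace ℝ (Fin n)) :
    iteratedFDeriv ℝ 2 (fun y : EuclideanSpace ℝ (Fin n) => ‖y‖ ^ γ) x ![u, v] =
      γ * ‖x‖ ^ (γ - 2) * (inner ℝ u v : ℝ)
        + γ * (γ - 2) * ‖x‖ ^ (γ - 4) * ((inner ℝ x u : ℝ) * (inner ℝ x v : ℝ)) := by
  classical
  have hxn : (0:ℝ) < ‖x‖ := norm_pos_iff.mpr hx
  set q : EuclideanSpace ℝ (Fin n) → ℝ := fun z => (inner ℝ z z : ℝ) with hqdef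
  have hqpos : ∀ z : EuclideanSpace ℝ (Fin n), z ≠ 0 → 0 < q z := by
    intro z hz
    have : q z = ‖z‖ ^ 2 := real_inner_self_eq_norm_sq z
    rw [this]
    exact pow_pos (norm_pos_iff.mpr hz) 2
  have hqx : ∀ (r : ℝ), q x ^ r = ‖x‖ ^ (2 * r) := by
    intro r
    have : q x = ‖x‖ ^ 2 := real_inner_self_eq_norm_sq x
    rw [this, ← Real.rpow_natCast ‖x‖ 2, ← Real.rpow_mul (norm_nonneg x)]
    norm_num
  set c : EuclideanSpace ℝ (Fin n) → ℝ := fun z => γ * q z ^ (γ/2 - 1) with hcdef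
  set F : EuclideanSpace ℝ (Fin n) → (EuclideanSpace ℝ (Fin n) →L[ℝ] ℝ) :=
    fun z => c z • Jmap n z with hFdef
  have hG : (fun y : EuclideanSpace ℝ (Fin n) => ‖y‖ ^ γ) = fun y => q y ^ (γ/2) := by
    funext y
    have : q y = ‖y‖ ^ 2 := real_inner_self_eq_norm_sq y
    rw [this, ← Real.rpow_natCast ‖y‖ 2, ← Real.rpow_mul (norm_nonneg y)]
    congr 1
    ring
  have hF' : ∀ z : EuclideanSpace ℝ (Fin n), z ≠ 0 →
      HasFDerivAt (fun y : EuclideanSpace ℝ (Fin n) => ‖y‖ ^ γ) (F z) z := by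
    intro z hz
    rw [hG]
    have h1 := (hasFDerivAt_q z).rpow_const (p := γ/2) (Or.inl (ne_of_gt (hqpos z hz)))
    refine HasFDerivAt.congr_fderiv h1 (Eq.symm ?_)
    rw [hFdef]
    simp only
    rw [smul_smul]
    congr 1
    simp only [hcdef, hqdef]
    ring
  have hev : fderiv ℝ (fun y : EuclideanSpace ℝ (Fin n) => ‖y‖ ^ γ) =ᶠ[nhds x] F := by
    filter_upwards [isOpen_ne.mem_nhds hx] with z hz
    exact (hF' z hz).fderiv
  have h2 : iteratedFDeriv ℝ 2 (fun y : EuclideanSpace ℝ (Fin n) => ‖y‖ ^ γ) x ![u, v]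
      = fderiv ℝ (fderiv ℝ (fun y : EuclideanSpace ℝ (Fin n) => ‖y‖ ^ γ)) x u v := by
    rw [iteratedFDeriv_two_apply]
    simp
  set c' : EuclideanSpace ℝ (Fin n) →L[ℝ] ℝ :=
    γ • ((γ/2 - 1) * q x ^ (γ/2 - 1 - 1)) • ((2:ℝ) • innerSL ℝ x) with hc'def
  have hc' : HasFDerivAt c c' x :=
    ((hasFDerivAt_q x).rpow_const (p := γ/2 - 1) (Or.inl (ne_of_gt (hqpos x hx)))).const_mul γ
  have hFx : HasFDerivAt F (c x • Jmap n + c'.smulRight (Jmap n x)) x :=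
    hc'.smul (Jmap n).hasFDerivAt
  rw [h2, hev.fderiv_eq, hFx.fderiv]
  simp only [ContinuousLinearMap.add_apply, ContinuousLinearMap.smul_apply,
    ContinuousLinearMap.smulRight_apply, ContinuousLinearMap.coe_smul', Pi.smul_apply,
    Jmap_apply, innerSL_apply_apply, hcdef, hc'def, smul_eq_mul]
  rw [hqx, hqx]
  rw [show (2:ℝ) * (γ/2 - 1) = γ - 2 by ring, show (2:ℝ) * (γ/2 - 1 - 1) = γ - 4 by ring]
  ring

/-- For G(x)=|x|^γ with γ = (1+(2-n)δ)/(1+δ), 0 ≤ δ < 1/(n-2), the matrix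
D²G + δ(ΔG)I has one eigenvalue 0 and n-1 eigenvalues γ(2-γ)|x|^{γ-2} > 0;
in particular its determinant is 0 and it is positive semidefinite. -/
theorem stmt_5 (n : ℕ) (hn : 3 ≤ n) (δ : ℝ) (hδ0 : 0 ≤ δ)
    (hδ1 : δ < 1 / ((n : ℝ) - 2)) (γ : ℝ)
    (hγ : γ = (1 + (2 - (n : ℝ)) * δ) / (1 + δ))
    (G : EuclideanSpace ℝ (Fin n) → ℝ) (hG : ∀ x, G x = ‖x‖ ^ γ)
    (x : EuclideanSpace ℝ (Fin n)) (hx : x ≠ 0)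
    (H : Matrix (Fin n) (Fin n) ℝ)
    (hH : ∀ i j, H i j = iteratedFDeriv ℝ 2 G x
        ![EuclideanSpace.single i (1 : ℝ), EuclideanSpace.single j (1 : ℝ)])
    (M : Matrix (Fin n) (Fin n) ℝ)
    (hM : M = H + δ • H.trace • (1 : Matrix (Fin n) (Fin n) ℝ)) :
    γ * (2 - γ) * ‖x‖ ^ (γ - 2) > 0 ∧
    (∃ hHerm : M.IsHermitian, ∃ i₀ : Fin n,
      hHerm.eigenvalues i₀ = 0 ∧
      ∀ i, i ≠ i₀ → hHerm.eigenvalues i = γ * (2 - γ) * ‖x‖ ^ (γ - 2)) ∧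
    M.det = 0 ∧ M.PosSemidef := by
  classical
  -- scalar preliminaries
  have hn3 : (3:ℝ) ≤ (n:ℝ) := by exact_mod_cast hn
  have hn2 : (0:ℝ) < (n:ℝ) - 2 := by linarith
  have hδn : δ * ((n:ℝ) - 2) < 1 := by
    have := (lt_div_iff₀ hn2).mp hδ1
    linarith
  have h1δ : (0:ℝ) < 1 + δ := by linarith
  have hnum : (0:ℝ) < 1 + (2 - (n:ℝ)) * δ := by nlinarith
  have hγpos : 0 < γ := by rw [hγ]; exact div_pos hnum h1δ
  have hγc : γ * (1 + δ) = 1 + (2 - (n:ℝ)) * δ := by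
    rw [hγ]; field_simp
  have hγ2 : γ < 2 := by nlinarith
  have hxn : (0:ℝ) < ‖x‖ := norm_pos_iff.mpr hx
  set P : ℝ := ‖x‖ ^ (γ - 2) with hP
  set Q : ℝ := ‖x‖ ^ (γ - 4) with hQ
  have hPpos : 0 < P := Real.rpow_pos_of_pos hxn _
  set c : ℝ := γ * (2 - γ) * P with hc
  set b : ℝ := γ * (γ - 2) * Q with hb
  have hcpos : 0 < c := by
    apply mul_pos (mul_pos hγpos (by linarith)) hPpos
  have hPQ : Q * ‖x‖ ^ (2:ℕ) = P := by
    rw [hP, hQ, ← Real.rpow_natCast ‖x‖ 2, ← Real.rpow_add hxn]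
    congr 1
    ring
  -- sums of squares
  set x' : Fin n → ℝ := fun i => x i with hx'def
  have hs : (∑ j, x' j * x' j) = ‖x‖ ^ (2:ℕ) := by
    rw [← real_inner_self_eq_norm_sq]
    simp only [PiLp.inner_apply, RCLike.inner_apply, conj_trivial, hx'def]
  have hx' : x' ≠ 0 := by
    intro h
    apply hx
    ext i
    exact congrFun h i
  -- entries of H
  have hGfun : G = fun y : EuclideanSpace ℝ (Fin n) => ‖y‖ ^ γ := funext hG
  have hHij : ∀ i j, H i j = (if i = j then γ * P else 0) + b * (x' i * x' j) := by
    intro i j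
    rw [hH i j, hGfun, hess γ hx]
    by_cases h : i = j
    · subst h
      simp [EuclideanSpace.inner_single_left, EuclideanSpace.inner_single_right,
        EuclideanSpace.single_apply, hb, hQ, hP, hx'def]
      try ring
    · simp [EuclideanSpace.inner_single_left, EuclideanSpace.inner_single_right,
        EuclideanSpace.single_apply, h, Ne.symm h, hb, hQ, hP, hx'def]
      try ring
  have htrH : H.trace = (n:ℝ) * (γ * P) + b * ‖x‖ ^ (2:ℕ) := by
    rw [Matrix.trace, ← hs]
    simp only [Matrix.diag_apply, hHij, if_pos rfl]
    rw [Finset.sum_add_distrib, Finset.sum_const, ← Finset.mul_sum]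
    simp [mul_comm]
  -- entries of M
  have hMij : ∀ i j, M i j = (if i = j then c else 0) + b * (x' i * x' j) := by
    intro i j
    rw [hM]
    simp only [Matrix.add_apply, Matrix.smul_apply, Matrix.one_apply, smul_eq_mul, hHij, htrH]
    have hbS : b * ‖x‖ ^ (2:ℕ) = γ * (γ - 2) * P := by
      rw [hb, mul_assoc, hPQ]
    by_cases h : i = j
    · subst h
      simp only [if_pos rfl, if_true, eq_self_iff_true, mul_one]
      linear_combination δ * hbS + (γ * P) * hγc
    · simp [h]
  -- Hermitian
  have hherm : M.IsHermitian := by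
    ext i j
    rw [Matrix.conjTranspose_apply, hMij, hMij, star_trivial]
    by_cases h : i = j
    · subst h; ring
    · rw [if_neg h, if_neg (Ne.symm h)]; ring
  -- mulVec identity
  have hmv : ∀ w : Fin n → ℝ, M *ᵥ w = c • w + (b * (∑ j, x' j * w j)) • x' := by
    intro w
    funext i
    simp only [Matrix.mulVec, dotProduct, Pi.add_apply, Pi.smul_apply, smul_eq_mul]
    have hterm : ∀ j, M i j * w j
        = (if j = i then c * w j else 0) + b * x' i * (x' j * w j) := by
      intro j
      rw [hMij]
      by_cases h : i = j
      · subst h; simp; ring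
      · simp [h, Ne.symm h]; ring
    rw [Finset.sum_congr rfl fun j _ => hterm j, Finset.sum_add_distrib,
      Finset.sum_ite_eq' Finset.univ i (fun j => c * w j), ← Finset.mul_sum]
    simp only [Finset.mem_univ, if_true]
    ring
  have hbS : b * (∑ j, x' j * x' j) = -c := by
    rw [hs, hb, hc, mul_assoc, hPQ]
    ring
  have hMx : M *ᵥ x' = 0 := by
    rw [hmv x', hbS]
    funext i
    simp
  have hdet : M.det = 0 := Matrix.exists_mulVec_eq_zero_iff.mp ⟨x', hx', hMx⟩
  -- eigenvalue dichotomy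
  have heig : ∀ i, hherm.eigenvalues i = 0 ∨ hherm.eigenvalues i = c := by
    intro i
    set lam := hherm.eigenvalues i with hlam
    have h1 : M *ᵥ ⇑(hherm.eigenvectorBasis i) = lam • ⇑(hherm.eigenvectorBasis i) :=
      hherm.mulVec_eigenvectorBasis i
    set v : Fin n → ℝ := ⇑(hherm.eigenvectorBasis i) with hv
    have hvne : v ≠ 0 := by
      intro h
      apply hherm.eigenvectorBasis.orthonormal.ne_zero i
      ext j
      exact congrFun h j
    have h2 : M *ᵥ (M *ᵥ v) = (lam * lam) • v := by
      rw [h1, Matrix.mulVec_smul, h1, smul_smul]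
    have h3 : M *ᵥ (M *ᵥ v) = (c * lam) • v := by
      conv_lhs => rw [hmv v]
      rw [Matrix.mulVec_add, Matrix.mulVec_smul, Matrix.mulVec_smul, hMx, h1]
      simp [smul_smul, mul_comm]
    have h4 : (lam * lam - c * lam) • v = 0 := by
      rw [sub_smul, h2.symm.trans h3]
      simp
    have h5 : lam * lam - c * lam = 0 := by
      rcases smul_eq_zero.mp h4 with h | h
      · exact h
      · exact absurd h hvne
    have := mul_eq_zero.mp (by linear_combination h5 : lam * (lam - c) = 0)
    rcases this with h | h
    · exact Or.inl h
    · exact Or.inr (by linarith [sub_eq_zero.mp h])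
  -- trace of M two ways
  have htrM : M.trace = ((n:ℝ) - 1) * c := by
    rw [Matrix.trace]
    simp only [Matrix.diag_apply, hMij, if_pos rfl]
    rw [Finset.sum_add_distrib, Finset.sum_const, ← Finset.mul_sum, hbS]
    simp
    ring
  have htr_eig : M.trace = ∑ i, hherm.eigenvalues i := by
    have hst := hherm.spectral_theorem
    have hU := (Unitary.mem_iff.mp (hherm.eigenvectorUnitary).2).1
    calc M.trace
        = Matrix.trace ((hherm.eigenvectorUnitary : Matrix (Fin n) (Fin n) ℝ)
            * Matrix.diagonal (RCLike.ofReal ∘ hherm.eigenvalues)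
            * (star (hherm.eigenvectorUnitary : Matrix (Fin n) (Fin n) ℝ))) := by
            conv_lhs => rw [hst]
            rw [Unitary.conjStarAlgAut_apply]
      _ = Matrix.trace ((star (hherm.eigenvectorUnitary : Matrix (Fin n) (Fin n) ℝ))
            * (hherm.eigenvectorUnitary : Matrix (Fin n) (Fin n) ℝ)
            * Matrix.diagonal (RCLike.ofReal ∘ hherm.eigenvalues)) := by
          rw [Matrix.trace_mul_cycle]
      _ = ∑ i, hherm.eigenvalues i := by
          rw [hU, one_mul, Matrix.trace_diagonal]
          simp
  -- counting
  set eig := hherm.eigenvalues with heigdef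
  set S : Finset (Fin n) := Finset.univ.filter (fun i => eig i ≠ 0) with hS
  have hSc : ∀ i ∈ S, eig i = c := by
    intro i hi
    rcases heig i with h | h
    · exact absurd h (Finset.mem_filter.mp hi).2
    · exact h
  have hsum : ∑ i, eig i = (S.card : ℝ) * c := by
    rw [← Finset.sum_filter_ne_zero Finset.univ (f := eig), ← hS,
      Finset.sum_congr rfl hSc, Finset.sum_const]
    simp [mul_comm]
  have hScard : (S.card : ℝ) = (n : ℝ) - 1 := by
    have h1 : (S.card : ℝ) * c = ((n:ℝ) - 1) * c := by
      rw [← hsum, ← htr_eig, htrM]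
    exact mul_right_cancel₀ (ne_of_gt hcpos) h1
  have hScardn : S.card = n - 1 := by
    have : ((n - 1 : ℕ) : ℝ) = (n:ℝ) - 1 := by
      have : (1:ℕ) ≤ n := by omega
      push_cast [Nat.cast_sub this]
      ring
    exact_mod_cast hScard.trans this.symm
  have hcompl : Sᶜ.card = 1 := by
    rw [Finset.card_compl, hScardn, Fintype.card_fin]
    omega
  obtain ⟨i₀, hi₀⟩ := Finset.card_eq_one.mp hcompl
  have hi₀0 : eig i₀ = 0 := by
    have : i₀ ∈ Sᶜ := hi₀ ▸ Finset.mem_singleton_self i₀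
    have := Finset.mem_compl.mp this
    rcases heig i₀ with h | h
    · exact h
    · exfalso
      apply this
      rw [hS, Finset.mem_filter]
      exact ⟨Finset.mem_univ _, by rw [h]; exact ne_of_gt hcpos⟩
  have hirest : ∀ i, i ≠ i₀ → eig i = c := by
    intro i hi
    apply hSc
    by_contra hnot
    have : i ∈ Sᶜ := Finset.mem_compl.mpr hnot
    rw [hi₀, Finset.mem_singleton] at this
    exact hi this
  have hpsd : M.PosSemidef := by
    apply hherm.posSemidef_iff_eigenvalues_nonneg.mpr
    intro i
    rcases heig i with h | h
    · exact le_of_eq h.symm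
    · exact le_of_le_of_eq hcpos.le h.symm
  exact ⟨hcpos, ⟨hherm, i₀, hi₀0, hirest⟩, hdet, hpsd⟩
end

section
/- Let Ω ⊂ ℝⁿ be open and v ∈ C²(Ω) be positive with ∇²v + δ(Δv)g + μ v g ≥ 0 pointwise, where g is the Euclidean metric, δ > 0, and μ > 0. Set p₀ = 2 + 1/δ. Then at every point where ∇v ≠ 0, div(|∇v|^{p₀−2}∇v) ≥ −μ(p₀−2)|∇v|^{p₀−2} v. -/
/-- If v ∈ C²(Ω) is positive and ∇²v + δ(Δv)I + μvI ≥ 0 on Ω ⊂ ℝⁿ,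
with δ, μ > 0 and p₀ = 2 + 1/δ, then at every point where ∇v ≠ 0,
div(|∇v|^{p₀−2}∇v) = (p₀−2)|∇v|^{p₀−4}∇²v(∇v,∇v) + |∇v|^{p₀−2}Δv
  ≥ −μ(p₀−2)|∇v|^{p₀−2} v. -/
theorem stmt_9 (n : ℕ) (hn : 2 ≤ n) (δ μ : ℝ) (hδ : 0 < δ) (hμ : 0 < μ)
    (Ω : Set (EuclideanSpace ℝ (Fin n))) (hΩ : IsOpen Ω)
    (v : EuclideanSpace ℝ (Fin n) → ℝ) (hv : ContDiffOn ℝ 2 v Ω)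
    (hvpos : ∀ x ∈ Ω, 0 < v x)
    (H : EuclideanSpace ℝ (Fin n) → Matrix (Fin n) (Fin n) ℝ)
    (hH : ∀ x, ∀ i j, H x i j = iteratedFDeriv ℝ 2 v x
        ![EuclideanSpace.single i (1 : ℝ), EuclideanSpace.single j (1 : ℝ)])
    (hcone : ∀ x ∈ Ω,
      (H x + δ • (H x).trace • (1 : Matrix (Fin n) (Fin n) ℝ) +
        μ • v x • (1 : Matrix (Fin n) (Fin n) ℝ)).PosSemidef)
    (p₀ : ℝ) (hp₀ : p₀ = 2 + 1 / δ) :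
    ∀ x ∈ Ω, gradient v x ≠ 0 →
      (p₀ - 2) * ‖gradient v x‖ ^ (p₀ - 4) *
          (∑ i, ∑ j, H x i j * gradient v x i * gradient v x j) +
        ‖gradient v x‖ ^ (p₀ - 2) * (H x).trace ≥
      -(μ * (p₀ - 2) * ‖gradient v x‖ ^ (p₀ - 2) * v x) := by
  intro x hx hg
  set A := H x with hA
  set g := gradient v x with hgdef
  set N := ‖g‖ with hN
  have hgn : 0 < N := norm_pos_iff.mpr hg
  set S := ∑ i, ∑ j, A i j * g i * g j with hS
  set tA := A.trace with htA
  have hnorm : (∑ i, g i * g i) = N ^ 2 := by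
    rw [hN, ← real_inner_self_eq_norm_sq]
    simp only [PiLp.inner_apply, RCLike.inner_apply, conj_trivial]
  -- quadratic form inequality
  have hq := (hcone x hx).dotProduct_mulVec_nonneg (fun i => g i)
  simp only [star_trivial, dotProduct, Matrix.mulVec, Matrix.add_apply, Matrix.smul_apply,
    Matrix.one_apply, smul_eq_mul, mul_ite, mul_one, mul_zero, add_mul, ite_mul, zero_mul,
    mul_add, Finset.sum_add_distrib, Finset.mul_sum, Finset.sum_ite_eq, Finset.mem_univ,
    if_true] at hq
  have key : 0 ≤ S + (δ * tA + μ * v x) * N ^ 2 := by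
    have e1 : ∑ i, ∑ j, g i * (A i j * g j) = S := by
      rw [hS]
      exact Finset.sum_congr rfl fun i _ => Finset.sum_congr rfl fun j _ => by ring
    have e2 : ∑ i, g i * (δ * tA * g i) = δ * tA * N ^ 2 := by
      rw [← hnorm, Finset.mul_sum]
      exact Finset.sum_congr rfl fun i _ => by ring
    have e3 : ∑ i, g i * (μ * v x * g i) = μ * v x * N ^ 2 := by
      rw [← hnorm, Finset.mul_sum]
      exact Finset.sum_congr rfl fun i _ => by ring
    rw [e1, e2, e3] at hq
    linarith
  have hpow : (0 : ℝ) ≤ N ^ (p₀ - 4) := Real.rpow_nonneg hgn.le _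
  have h2 : N ^ (p₀ - 2) = N ^ (p₀ - 4) * N ^ 2 := by
    rw [show p₀ - 2 = (p₀ - 4) + ((2 : ℕ) : ℝ) by push_cast; ring,
      Real.rpow_add hgn, Real.rpow_natCast]
  have hc : p₀ - 2 = 1 / δ := by rw [hp₀]; ring
  rw [ge_iff_le, ← sub_nonneg, h2, hc]
  have heq : 1 / δ * N ^ (p₀ - 4) * S + N ^ (p₀ - 4) * N ^ 2 * tA -
      -(μ * (1 / δ) * (N ^ (p₀ - 4) * N ^ 2) * v x) =
      1 / δ * N ^ (p₀ - 4) * (S + (δ * tA + μ * v x) * N ^ 2) := by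
    field_simp
    ring
  rw [heq]
  positivity
end

section
/- Let n ≥ 3, 0 ≤ δ < 1/(n-2), β = (1 + (2-n)δ)/(2(1+δ)), and α = 1/β. Suppose u ∈ C²(Ω), Ω ⊂ ℝⁿ open, satisfies that the symmetric matrix ∇²u + du⊗du − ½|∇u|²I lies in the closed cone Γ̄_δ (its eigenvalue vector satisfies λᵢ ≥ −δ∑λⱼ) at each point. Then v = e^{βu} satisfies ∇²v ∈ Γ̄_δ at each point; i.e., v is δ-convex. -/
open Matrix in
lemma sum_eig_eq_trace {n : ℕ} (M : Matrix (Fin n) (Fin n) ℝ) (hM : M.IsHermitian) :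
    ∑ i, hM.eigenvalues i = M.trace := by
  simp [hM.trace_eq_sum_eigenvalues]

open Matrix in
lemma eig_eq_quad {n : ℕ} (M : Matrix (Fin n) (Fin n) ℝ) (hM : M.IsHermitian) (i : Fin n) :
    hM.eigenvalues i = dotProduct (hM.eigenvectorBasis i)
      (M *ᵥ (hM.eigenvectorBasis i)) := by
  have := hM.eigenvalues_eq i
  simpa using this

open Matrix in
lemma quad_ge {n : ℕ} (M : Matrix (Fin n) (Fin n) ℝ) (hM : M.IsHermitian) (c : ℝ)
    (h : ∀ i, c ≤ hM.eigenvalues i) (w : EuclideanSpace ℝ (Fin n)) :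
    c * (inner ℝ w w : ℝ) ≤ (inner ℝ w (Matrix.toEuclideanLin M w) : ℝ) := by
  set T := Matrix.toEuclideanLin M with hT
  have hsym : LinearMap.IsSymmetric T := Matrix.isHermitian_iff_isSymmetric.1 hM
  set B := hM.eigenvectorBasis with hB
  have hTB : ∀ i, T (B i) = hM.eigenvalues i • B i := by
    intro i
    have := hM.mulVec_eigenvectorBasis i
    apply (WithLp.equiv 2 (Fin n → ℝ)).injective
    simpa [hT, hB, Matrix.ofLp_toEuclideanLin_apply] using this
  have e1 : (inner ℝ w (T w) : ℝ) = ∑ i, hM.eigenvalues i * (inner ℝ w (B i) : ℝ)^2 := by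
    rw [← B.sum_inner_mul_inner w (T w)]
    refine Finset.sum_congr rfl fun i _ => ?_
    rw [← hsym (B i) w, hTB i, inner_smul_left]
    simp only [RCLike.star_def, conj_trivial]
    rw [real_inner_comm (B i) w]
    ring
  have e2 : (inner ℝ w w : ℝ) = ∑ i, (inner ℝ w (B i) : ℝ)^2 := by
    rw [← B.sum_inner_mul_inner w w]
    refine Finset.sum_congr rfl fun i _ => ?_
    rw [real_inner_comm (B i) w]; ring
  rw [e1, e2, Finset.mul_sum]
  exact Finset.sum_le_sum fun i _ => mul_le_mul_of_nonneg_right (h i) (sq_nonneg _)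

lemma grad_coord {n : ℕ} (u : EuclideanSpace ℝ (Fin n) → ℝ) (x : EuclideanSpace ℝ (Fin n))
    (i : Fin n) : gradient u x i = fderiv ℝ u x (EuclideanSpace.single i 1) := by
  have h := InnerProductSpace.toDual_symm_apply (𝕜 := ℝ) (E := EuclideanSpace ℝ (Fin n))
    (x := EuclideanSpace.single i 1) (y := fderiv ℝ u x)
  rw [gradient]
  rw [← h]
  rw [real_inner_comm]
  simp [EuclideanSpace.inner_single_left]

lemma norm_sq_grad {n : ℕ} (g : EuclideanSpace ℝ (Fin n)) :
    ‖g‖^2 = ∑ i, g i ^ 2 := by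
  rw [← real_inner_self_eq_norm_sq]
  simp [PiLp.inner_apply, RCLike.inner_apply]
  simp [EuclideanSpace.norm_sq_eq]

open Matrix in
lemma matrix_decomp {n : ℕ} (P Q : Matrix (Fin n) (Fin n) ℝ) (c t e : ℝ) (g : Fin n → ℝ)
    (h : ∀ i j, Q i j = c * (P i j + t * (g i * g j) + e * (if i = j then 1 else 0))) :
    Q = c • (P + t • Matrix.vecMulVec g g + e • (1 : Matrix (Fin n) (Fin n) ℝ)) := by
  ext i j
  simp only [h, Matrix.smul_apply, Matrix.add_apply, Matrix.vecMulVec_apply,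
    Matrix.one_apply, smul_eq_mul]

open Matrix in
lemma vecMulVec_mulVec' {n : ℕ} (g w : Fin n → ℝ) :
    (Matrix.vecMulVec g g) *ᵥ w = (dotProduct g w) • g := by
  ext k
  simp [Matrix.mulVec, Matrix.vecMulVec_apply, dotProduct, Finset.mul_sum,
    Finset.sum_mul]
  exact Finset.sum_congr rfl fun j _ => by ring

open Matrix in
lemma quad_decomp {n : ℕ} (P Q : Matrix (Fin n) (Fin n) ℝ) (c t e : ℝ) (g : Fin n → ℝ)
    (h : ∀ i j, Q i j = c * (P i j + t * (g i * g j) + e * (if i = j then 1 else 0)))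
    (w : Fin n → ℝ) :
    dotProduct w (Q *ᵥ w) = c * (dotProduct w (P *ᵥ w)
      + t * (dotProduct g w)^2 + e * dotProduct w w) := by
  rw [matrix_decomp P Q c t e g h]
  rw [Matrix.smul_mulVec, Matrix.add_mulVec, Matrix.add_mulVec,
    Matrix.smul_mulVec, Matrix.smul_mulVec, Matrix.one_mulVec,
    vecMulVec_mulVec']
  simp [dotProduct_add, dotProduct_smul, smul_eq_mul]
  rw [show dotProduct w g = dotProduct g w from dotProduct_comm w g]
  try ring

open Matrix in
lemma trace_decomp {n : ℕ} (P Q : Matrix (Fin n) (Fin n) ℝ) (c t e : ℝ) (g : Fin n → ℝ)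
    (h : ∀ i j, Q i j = c * (P i j + t * (g i * g j) + e * (if i = j then 1 else 0))) :
    Q.trace = c * (P.trace + t * dotProduct g g + e * n) := by
  rw [matrix_decomp P Q c t e g h]
  rw [Matrix.trace_smul, Matrix.trace_add, Matrix.trace_add, Matrix.trace_smul,
    Matrix.trace_smul, Matrix.trace_one]
  have : (Matrix.vecMulVec g g).trace = dotProduct g g := by
    simp [Matrix.trace, Matrix.diag, Matrix.vecMulVec_apply, dotProduct]
  rw [this]
  simp [smul_eq_mul]
  try ring

lemma hess_exp {n : ℕ} (β : ℝ) (Ω : Set (EuclideanSpace ℝ (Fin n))) (hΩ : IsOpen Ω)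
    (u : EuclideanSpace ℝ (Fin n) → ℝ) (hu : ContDiffOn ℝ 2 u Ω)
    (x : EuclideanSpace ℝ (Fin n)) (hx : x ∈ Ω) (a b : EuclideanSpace ℝ (Fin n)) :
    iteratedFDeriv ℝ 2 (fun y => Real.exp (β * u y)) x ![a, b]
      = β * Real.exp (β * u x) *
        (iteratedFDeriv ℝ 2 u x ![a, b] + β * fderiv ℝ u x a * fderiv ℝ u x b) := by
  have hCA : ∀ y ∈ Ω, ContDiffAt ℝ 2 u y := fun y hy => hu.contDiffAt (hΩ.mem_nhds hy)
  have hdiff : ∀ y ∈ Ω, DifferentiableAt ℝ u y :=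
    fun y hy => (hCA y hy).differentiableAt two_ne_zero
  have hfd : ∀ y ∈ Ω, HasFDerivAt (fun z => Real.exp (β * u z))
      ((β * Real.exp (β * u y)) • fderiv ℝ u y) y := by
    intro y hy
    have h1 : HasFDerivAt (fun z => β * u z) (β • fderiv ℝ u y) y :=
      ((hdiff y hy).hasFDerivAt).const_mul β
    have h2 := (Real.hasDerivAt_exp (β * u y)).comp_hasFDerivAt y h1
    have : Real.exp (β * u y) • β • fderiv ℝ u y
        = (β * Real.exp (β * u y)) • fderiv ℝ u y := by
      rw [smul_smul]; ring_nf
    rwa [this] at h2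
  have hveq : Set.EqOn (fderiv ℝ (fun z => Real.exp (β * u z)))
      (fun y => (β * Real.exp (β * u y)) • fderiv ℝ u y) Ω :=
    fun y hy => (hfd y hy).fderiv
  have hf'' : DifferentiableAt ℝ (fderiv ℝ u) x := by
    have := (hCA x hx).fderiv_right (m := 1) (by norm_num)
    exact this.differentiableAt one_ne_zero
  have hφ : HasFDerivAt (fun y => β * Real.exp (β * u y))
      (β • ((β * Real.exp (β * u x)) • fderiv ℝ u x)) x := (hfd x hx).const_mul β
  have hprod : HasFDerivAt (fun y => (β * Real.exp (β * u y)) • fderiv ℝ u y)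
      ((β * Real.exp (β * u x)) • fderiv ℝ (fderiv ℝ u) x
        + (β • ((β * Real.exp (β * u x)) • fderiv ℝ u x)).smulRight (fderiv ℝ u x)) x :=
    hφ.smul hf''.hasFDerivAt
  have hsnd : fderiv ℝ (fderiv ℝ (fun z => Real.exp (β * u z))) x
      = (β * Real.exp (β * u x)) • fderiv ℝ (fderiv ℝ u) x
        + (β • ((β * Real.exp (β * u x)) • fderiv ℝ u x)).smulRight (fderiv ℝ u x) := by
    have heq : fderiv ℝ (fun z => Real.exp (β * u z))
        =ᶠ[nhds x] (fun y => (β * Real.exp (β * u y)) • fderiv ℝ u y) :=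
      Filter.eventuallyEq_of_mem (hΩ.mem_nhds hx) hveq
    rw [Filter.EventuallyEq.fderiv_eq heq]
    exact hprod.fderiv
  rw [iteratedFDeriv_two_apply, iteratedFDeriv_two_apply]
  simp only [Matrix.cons_val_zero, Matrix.cons_val_one, Matrix.head_cons]
  rw [hsnd]
  simp [ContinuousLinearMap.smulRight_apply]
  ring
open Matrix in
lemma quad_ge_dot {n : ℕ} (M : Matrix (Fin n) (Fin n) ℝ) (hM : M.IsHermitian) (c : ℝ)
    (h : ∀ i, c ≤ hM.eigenvalues i) (w : Fin n → ℝ) :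
    c * dotProduct w w ≤ dotProduct w (M *ᵥ w) := by
  have := quad_ge M hM c h ((WithLp.equiv 2 (Fin n → ℝ)).symm w)
  rw [real_inner_self_eq_norm_sq, EuclideanSpace.norm_sq_eq] at this
  simpa [Matrix.toEuclideanLin_apply, PiLp.inner_apply, RCLike.inner_apply,
    dotProduct, conj_trivial, sq, mul_comm] using this

lemma dot_eigenbasis_self {n : ℕ} (M : Matrix (Fin n) (Fin n) ℝ) (hM : M.IsHermitian)
    (i : Fin n) : dotProduct (hM.eigenvectorBasis i) (hM.eigenvectorBasis i) = 1 := by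
  have h1 : ‖hM.eigenvectorBasis i‖ = 1 := hM.eigenvectorBasis.orthonormal.1 i
  have h2 : (inner ℝ (hM.eigenvectorBasis i) (hM.eigenvectorBasis i) : ℝ) = 1 := by
    rw [real_inner_self_eq_norm_sq, h1]; norm_num
  rw [← h2]
  rw [real_inner_self_eq_norm_sq, EuclideanSpace.norm_sq_eq]
  simp [PiLp.inner_apply, RCLike.inner_apply, dotProduct, conj_trivial, sq]

set_option maxHeartbeats 2000000 in
/-- Flat-background admissibility implies δ-convexity: if
A_u = ∇²u + du⊗du − ½|∇u|²I has eigenvalue vector in the closed cone Γ̄_δ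
at each point of Ω, 0 ≤ δ < 1/(n-2), and β = (1+(2-n)δ)/(2(1+δ)),
then v = e^{βu} has ∇²v with eigenvalue vector in Γ̄_δ at each point. -/
theorem stmt_12 (n : ℕ) (hn : 3 ≤ n) (δ : ℝ) (hδ0 : 0 ≤ δ)
    (hδ1 : δ < 1 / ((n : ℝ) - 2)) (β : ℝ)
    (hβ : β = (1 + (2 - (n : ℝ)) * δ) / (2 * (1 + δ)))
    (Ω : Set (EuclideanSpace ℝ (Fin n))) (hΩ : IsOpen Ω)
    (u : EuclideanSpace ℝ (Fin n) → ℝ) (hu : ContDiffOn ℝ 2 u Ω)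
    (v : EuclideanSpace ℝ (Fin n) → ℝ) (hv : ∀ x, v x = Real.exp (β * u x))
    (Hu Hv A : EuclideanSpace ℝ (Fin n) → Matrix (Fin n) (Fin n) ℝ)
    (hHu : ∀ x, ∀ i j, Hu x i j = iteratedFDeriv ℝ 2 u x
        ![EuclideanSpace.single i (1 : ℝ), EuclideanSpace.single j (1 : ℝ)])
    (hHv : ∀ x, ∀ i j, Hv x i j = iteratedFDeriv ℝ 2 v x
        ![EuclideanSpace.single i (1 : ℝ), EuclideanSpace.single j (1 : ℝ)])
    (hA : ∀ x, ∀ i j, A x i j = Hu x i j +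
        gradient u x i * gradient u x j -
        (1 / 2) * ‖gradient u x‖ ^ 2 * (if i = j then 1 else 0))
    (hadm : ∀ x ∈ Ω, ∀ hHerm : (A x).IsHermitian,
      ∀ i, hHerm.eigenvalues i ≥ -δ * ∑ j, hHerm.eigenvalues j) :
    ∀ x ∈ Ω, ∀ hHerm : (Hv x).IsHermitian,
      ∀ i, hHerm.eigenvalues i ≥ -δ * ∑ j, hHerm.eigenvalues j := by
  intro x hx hHerm i
  -- numeric facts
  have hn3 : (3 : ℝ) ≤ (n : ℝ) := by exact_mod_cast hn
  have hn2 : (0 : ℝ) < (n : ℝ) - 2 := by linarith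
  have hδn : δ * ((n : ℝ) - 2) < 1 := by rwa [lt_div_iff₀ hn2] at hδ1
  have hβpos : 0 < β := by
    rw [hβ]; apply div_pos <;> nlinarith
  have hb : β * (2 * (1 + δ)) = 1 + (2 - (n : ℝ)) * δ := by
    rw [hβ]; field_simp
  have hkey : (β - 1) * (2 * (1 + δ)) = -(1 + (n : ℝ) * δ) := by
    linear_combination hb
  have hnδ : 0 ≤ (n : ℝ) * δ := by positivity
  have hβ1 : β - 1 ≤ 0 := by nlinarith
  -- function equality
  have hveq : v = fun y => Real.exp (β * u y) := funext hv
  -- gradient coordinates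
  set g : Fin n → ℝ := fun j => fderiv ℝ u x (EuclideanSpace.single j 1) with hg
  have hgrad : ∀ j, gradient u x j = g j := fun j => grad_coord u x j
  set c := β * Real.exp (β * u x) with hc
  have hcpos : 0 < c := mul_pos hβpos (Real.exp_pos _)
  have hnorm : ‖gradient u x‖ ^ 2 = dotProduct g g := by
    rw [norm_sq_grad (gradient u x)]
    simp only [dotProduct]
    exact Finset.sum_congr rfl fun j _ => by rw [hgrad j]; ring
  set e := (1 / 2) * ‖gradient u x‖ ^ 2 with he
  -- entrywise formula for Hv
  have hentry : ∀ i j, Hv x i j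
      = c * (A x i j + (β - 1) * (g i * g j) + e * (if i = j then 1 else 0)) := by
    intro i j
    have hAij := hA x i j
    rw [hgrad i, hgrad j] at hAij
    rw [hHv, hveq, hess_exp β Ω hΩ u hu x hx, ← hHu]
    rw [hAij, hc, he]
    ring
  -- A x is Hermitian
  have hHuSymm : ∀ i j, Hu x i j = Hu x j i := by
    intro i j
    rw [hHu, hHu, iteratedFDeriv_two_apply, iteratedFDeriv_two_apply]
    simp only [Matrix.cons_val_zero, Matrix.cons_val_one, Matrix.head_cons]
    exact ((hu.contDiffAt (hΩ.mem_nhds hx)).isSymmSndFDerivAt (by norm_num)) _ _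
  have hAH : (A x).IsHermitian := by
    rw [Matrix.IsHermitian]
    ext i j
    rw [Matrix.conjTranspose_apply, star_trivial, hA x j i, hA x i j, hHuSymm j i]
    by_cases hij : i = j
    · subst hij; ring
    · simp [hij, Ne.symm hij]; ring
  -- quadratic lower bound from admissibility
  have hQA : ∀ w : Fin n → ℝ,
      -δ * (A x).trace * dotProduct w w ≤ dotProduct w (Matrix.mulVec (A x) w) := by
    intro w
    refine quad_ge_dot (A x) hAH _ ?_ w
    intro k
    have := hadm x hx hAH k
    rwa [sum_eig_eq_trace _ hAH] at this
  -- eigen data for Hv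
  have htr : ∑ j, hHerm.eigenvalues j = (Hv x).trace := sum_eig_eq_trace _ hHerm
  set b : Fin n → ℝ := ⇑(hHerm.eigenvectorBasis i) with hbdef
  have hbb : dotProduct b b = 1 := dot_eigenbasis_self _ hHerm i
  have heig : hHerm.eigenvalues i = dotProduct b (Matrix.mulVec (Hv x) b) :=
    eig_eq_quad _ hHerm i
  rw [ge_iff_le, htr, heig]
  have hq := quad_decomp (A x) (Hv x) c (β - 1) e g hentry b
  have ht := trace_decomp (A x) (Hv x) c (β - 1) e g hentry
  have hcs : (dotProduct g b) ^ 2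
      ≤ dotProduct g g * dotProduct b b := by
    have h1 := Finset.sum_mul_sq_le_sq_mul_sq Finset.univ g b
    simp only [dotProduct]
    calc (∑ j, g j * b j) ^ 2 ≤ (∑ j, g j ^ 2) * (∑ j, b j ^ 2) := h1
      _ = (∑ j, g j * g j) * (∑ j, b j * b j) := by
          rw [Finset.sum_congr rfl fun j _ => sq (g j),
            Finset.sum_congr rfl fun j _ => sq (b j)]
  rw [hbb, mul_one] at hcs
  have hQAb := hQA b
  rw [hbb, mul_one] at hQAb
  rw [hq, ht, hbb, he, hnorm]
  set G2 := dotProduct g g with hG2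
  have hG2nn : 0 ≤ G2 := by
    rw [hG2]; simp only [dotProduct]
    exact Finset.sum_nonneg fun j _ => mul_self_nonneg (g j)
  set S := dotProduct g b with hS
  set TA := (A x).trace with hTA
  set Qb := dotProduct b (Matrix.mulVec (A x) b) with hQb
  have h6 : 0 ≤ c * (1 - β) * (G2 - S ^ 2) := by
    apply mul_nonneg (mul_nonneg hcpos.le (by linarith)) (by linarith)
  have h7 : 0 ≤ c * (Qb + δ * TA) := by
    apply mul_nonneg hcpos.le
    nlinarith [hQAb]
  have h5 : (β - 1) * (2 * (1 + δ)) * (c * G2) = -(1 + (n : ℝ) * δ) * (c * G2) := by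
    rw [hkey]
  nlinarith [h5, h6, h7]
end
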